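/- Let k be a field of characteristic p > 0 and f = x·y·g ∈ k[x, y] a homogeneous polynomial of degree d ≥ 3, where g is a homogeneous polynomial of degree d − 2. If N and e are natural numbers with f^N ∈ ⟨x^{p^e}, y^{p^e}⟩, then N·(d−1) ≥ p^e, i.e., N/p^e ≥ 1/(d−1). -/

import Mathlib

open MvPolynomial

/-- Let `f = x·y·g ∈ k[x,y]` be homogeneous of degree `d ≥ 3` with `g` homogeneous of degree
`d − 2`. If `f^N ∈ ⟨x^{pᵉ}, y^{pᵉ}⟩`, then `N·(d−1) ≥ pᵉ`. -/
theorem stmt5 {k : Type*} [Field k] (p : ℕ) [Fact p.Prime] [CharP k p]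
    (g : MvPolynomial (Fin 2) k) (d : ℕ) (hd : 3 ≤ d)
    (hg : g.IsHomogeneous (d - 2)) (hg0 : g ≠ 0)
    (N e : ℕ)
    (hmem : (X 0 * X 1 * g) ^ N ∈
      Ideal.span (Set.range fun i : Fin 2 => (X i : MvPolynomial (Fin 2) k) ^ p ^ e)) :
    p ^ e ≤ N * (d - 1) := by
  set q := p ^ e with hq
  -- rewrite the generators as monomials
  have hset : (Set.range fun i : Fin 2 => (X i : MvPolynomial (Fin 2) k) ^ q)
      = (fun s => monomial s (1 : k)) '' (Set.range fun i : Fin 2 => Finsupp.single i q) := by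
    ext f
    simp [X_pow_eq_monomial]
  rw [hset, mem_ideal_span_monomial_image] at hmem
  -- g^N is homogeneous of degree N*(d-2) and nonzero
  have hgN : (g ^ N).IsHomogeneous (N * (d - 2)) := by
    simpa [mul_comm] using hg.pow N
  have hgN0 : g ^ N ≠ 0 := pow_ne_zero _ hg0
  obtain ⟨m, hm⟩ := (support_nonempty.mpr hgN0)
  have hmc : coeff m (g ^ N) ≠ 0 := mem_support_iff.mp hm
  set t : Fin 2 →₀ ℕ := Finsupp.single 0 N + Finsupp.single 1 N with ht
  -- (X 0 * X 1 * g)^N = monomial t 1 * g^N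
  have hfac : (X 0 * X 1 * g : MvPolynomial (Fin 2) k) ^ N = monomial t 1 * g ^ N := by
    rw [mul_pow, mul_pow, X_pow_eq_monomial, X_pow_eq_monomial, monomial_mul, one_mul]
  have hcoeff : coeff (t + m) ((X 0 * X 1 * g : MvPolynomial (Fin 2) k) ^ N)
      = coeff m (g ^ N) := by
    rw [hfac, coeff_monomial_mul, one_mul]
  have hsupp : t + m ∈ ((X 0 * X 1 * g : MvPolynomial (Fin 2) k) ^ N).support :=
    mem_support_iff.mpr (by rw [hcoeff]; exact hmc)
  obtain ⟨si, ⟨i, rfl⟩, hle⟩ := hmem _ hsupp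
  have hle' : q ≤ (t + m) i := Finsupp.single_le_iff.mp hle
  -- each component of m is at most the total degree N*(d-2)
  have hdeg : (m.sum fun _ e => e) = N * (d - 2) := by
    have := hgN hmc
    change (Finsupp.weight (fun _ => 1)) m = _ at this
    rwa [← Finsupp.degree_eq_weight_one, Finsupp.degree] at this
  have hmi : ∀ j : Fin 2, m j ≤ N * (d - 2) := by
    intro j
    rw [← hdeg, Finsupp.sum]
    by_cases hj : m j = 0
    · simp [hj]
    · exact Finset.single_le_sum (fun _ _ => Nat.zero_le _) (Finsupp.mem_support_iff.mpr hj)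
  have hti : t i = N := by
    fin_cases i <;> simp [ht, Finsupp.single_apply]
  have : q ≤ N + N * (d - 2) := by
    have := hmi i
    simp only [Finsupp.add_apply, hti] at hle'
    omega
  have hdd : N * (d - 1) = N + N * (d - 2) := by
    have : d - 1 = (d - 2) + 1 := by omega
    rw [this, Nat.mul_add, mul_one, add_comm]
  omega
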